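/- Hash-table insertion succeeds when occupancy is low in every stage: in a multi-stage hash table with n stages of m slots each, if a request hashes to slot h in every stage and at least one of the n slots indexed h across the stages is empty, the insert procedure (scanning stages in order and writing to the first empty slot at index h) places the request, and a subsequent read with the same request id returns the stored server IP. -/

import Mathlib

abbrev ReqId := ℕ
abbrev IP := ℕ

/-- Insert `(r, ip)` at hash index `h` into the first stage whose slot `h` is empty. -/
def insertReq {n m : ℕ} (t : Fin n → Fin m → Option (ReqId × IP))
    (h : Fin m) (r : ReqId) (ip : IP) : Fin n → Fin m → Option (ReqId × IP) :=
  match (List.finRange n).find? (fun i => (t i h).isNone) with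
  | some i => fun i' s => if i' = i ∧ s = h then some (r, ip) else t i' s
  | none => t

/-- Read the server IP stored for request `r` at hash index `h`. -/
def readReq {n m : ℕ} (t : Fin n → Fin m → Option (ReqId × IP))
    (h : Fin m) (r : ReqId) : Option IP :=
  ((List.finRange n).find? (fun i => (t i h).map Prod.fst == some r)).bind
    (fun i => (t i h).map Prod.snd)

private lemma find?_transfer {α : Type*} (p q : α → Bool) (i₀ : α)
    (hq : q i₀ = true) (hpq : ∀ a, p a = false → q a = false) :
    ∀ l : List α, l.find? p = some i₀ → l.find? q = some i₀ := by
  intro l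
  induction l with
  | nil => simp
  | cons a l ih =>
    intro hf
    by_cases hpa : p a = true
    · rw [List.find?_cons_of_pos hpa] at hf
      obtain rfl : a = i₀ := by injection hf
      rw [List.find?_cons_of_pos hq]
    · have hpa' : p a = false := by simpa using hpa
      rw [List.find?_cons_of_neg (by simp [hpa'])] at hf
      rw [List.find?_cons_of_neg (by simp [hpq a hpa'])]
      exact ih hf

theorem insert_then_read
    {n m : ℕ} (t : Fin n → Fin m → Option (ReqId × IP))
    (h : Fin m) (r : ReqId) (ip : IP)
    (hfresh : ∀ i x, t i h = some x → x.1 ≠ r)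
    (hempty : ∃ i, t i h = none) :
    readReq (insertReq t h r ip) h r = some ip := by
  obtain ⟨j, hj⟩ := hempty
  have hsome : ((List.finRange n).find? (fun i => (t i h).isNone)).isSome := by
    rw [List.find?_isSome]
    exact ⟨j, List.mem_finRange j, by simp [hj]⟩
  obtain ⟨i₀, hi₀⟩ := Option.isSome_iff_exists.mp hsome
  have hi₀none : (t i₀ h).isNone := by
    simpa using List.find?_some hi₀
  set t' := insertReq t h r ip with ht'
  have ht'def : t' = fun i' s => if i' = i₀ ∧ s = h then some (r, ip) else t i' s := by
    rw [ht', insertReq, hi₀]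
  have ht'i₀ : t' i₀ h = some (r, ip) := by rw [ht'def]; simp
  have hq : (fun i => ((t' i h).map Prod.fst == some r)) i₀ = true := by
    simp [ht'i₀]
  have hpq : ∀ a, (fun i => (t i h).isNone) a = false →
      (fun i => ((t' i h).map Prod.fst == some r)) a = false := by
    intro a ha
    simp only [Option.isNone_eq_false_iff, Option.isSome_iff_exists] at ha
    obtain ⟨x, hx⟩ := ha
    have hne : a ≠ i₀ := by
      intro rfl'; subst rfl'
      rw [hx] at hi₀none; simp at hi₀none
    have : t' a h = some x := by rw [ht'def]; simp [hne, hx]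
    simp [this, hfresh a x hx]
  have hfind := find?_transfer _ _ i₀ hq hpq (List.finRange n) hi₀
  rw [readReq, hfind]
  simp [ht'i₀]
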